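/- Let d ≥ 1, let V be a finite set with |V| = n and d ≤ n, and let E be a finite family of nonempty subsets of V, each of size at most d. Then there exists a subfamily E' ⊆ E with |E'| ≤ 2·n^{d−1} such that the hypergraph (V, E) is properly 2-colorable if and only if the hypergraph (V, E') is properly 2-colorable. -/

import Mathlib

open Finset Submodule

section Aux

variable {V : Type} [Fintype V] [DecidableEq V]

/-- coordinate function -/
noncomputable def chiF (v : V) : (V → Fin 2) → ℚ := fun c => ((c v : ℕ) : ℚ)

/-- multilinear monomial -/
noncomputable def monF (S : Finset V) : (V → Fin 2) → ℚ := fun c => ∏ v ∈ S, chiF v c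

/-- the polynomial attached to an edge -/
noncomputable def PF (e : Finset V) : (V → Fin 2) → ℚ :=
  fun c => ∏ j ∈ Finset.range (e.card - 1), ((∑ v ∈ e, chiF v c) - (j + 1))

/-- span of monomials of degree ≤ t -/
noncomputable def UF (t : ℕ) : Submodule ℚ ((V → Fin 2) → ℚ) :=
  Submodule.span ℚ (monF '' {S : Finset V | S.card ≤ t})

lemma chiF_sq (v : V) (c : V → Fin 2) : chiF v c * chiF v c = chiF v c := by
  have h : (c v : ℕ) = 0 ∨ (c v : ℕ) = 1 := by omega
  rcases h with h | h <;> simp [chiF, h]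

lemma monF_mul_chiF (S : Finset V) (v : V) (c : V → Fin 2) :
    monF S c * chiF v c = monF (insert v S) c := by
  by_cases hv : v ∈ S
  · rw [Finset.insert_eq_self.2 hv]
    simp only [monF]
    rw [← Finset.mul_prod_erase S _ hv, mul_right_comm, chiF_sq]
  · simp only [monF]
    rw [Finset.prod_insert hv, mul_comm]

lemma mul_linear_mem (e : Finset V) (b : ℚ) (t : ℕ) (g : (V → Fin 2) → ℚ)
    (hg : g ∈ UF (V := V) t) :
    (fun c => g c * ((∑ v ∈ e, chiF v c) - b)) ∈ UF (V := V) (t + 1) := by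
  induction hg using Submodule.span_induction with
  | mem x hx =>
    obtain ⟨S, hS, rfl⟩ := hx
    have hfun : (fun c => monF S c * ((∑ v ∈ e, chiF v c) - b)) =
        (∑ v ∈ e, monF (insert v S)) - b • monF S := by
      funext c
      simp only [Pi.sub_apply, Finset.sum_apply, Pi.smul_apply, smul_eq_mul]
      rw [mul_sub, Finset.mul_sum]
      congr 1
      · exact Finset.sum_congr rfl fun v _ => monF_mul_chiF S v c
      · ring
    rw [hfun]
    refine Submodule.sub_mem _ (Submodule.sum_mem _ fun v _ => Submodule.subset_span ?_)
      (Submodule.smul_mem _ _ (Submodule.subset_span ?_))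
    · exact ⟨insert v S, le_trans (Finset.card_insert_le v S) (Nat.add_le_add_right hS 1), rfl⟩
    · exact ⟨S, le_trans hS (Nat.le_succ t), rfl⟩
  | zero =>
    have : (fun c => (0 : (V → Fin 2) → ℚ) c * ((∑ v ∈ e, chiF v c) - b)) =
        (0 : (V → Fin 2) → ℚ) := by funext c; simp
    rw [this]; exact Submodule.zero_mem _
  | add x y hx hy ihx ihy =>
    have : (fun c => (x + y) c * ((∑ v ∈ e, chiF v c) - b)) =
        (fun c => x c * ((∑ v ∈ e, chiF v c) - b)) +
        (fun c => y c * ((∑ v ∈ e, chiF v c) - b)) := by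
      funext c; simp [add_mul]
    rw [this]; exact Submodule.add_mem _ ihx ihy
  | smul a x hx ihx =>
    have : (fun c => (a • x) c * ((∑ v ∈ e, chiF v c) - b)) =
        a • (fun c => x c * ((∑ v ∈ e, chiF v c) - b)) := by
      funext c; simp [mul_assoc]
    rw [this]; exact Submodule.smul_mem _ _ ihx

lemma prod_linear_mem (e : Finset V) (t : ℕ) :
    (fun c => ∏ j ∈ Finset.range t, ((∑ v ∈ e, chiF v c) - (j + 1))) ∈ UF (V := V) t := by
  induction t with
  | zero =>
    have : (fun c : V → Fin 2 => ∏ j ∈ Finset.range 0, ((∑ v ∈ e, chiF v c) - (j + 1)))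
        = monF (∅ : Finset V) := by
      funext c; simp [monF]
    rw [this]
    exact Submodule.subset_span ⟨∅, by simp, rfl⟩
  | succ t ih =>
    have : (fun c : V → Fin 2 => ∏ j ∈ Finset.range (t + 1), ((∑ v ∈ e, chiF v c) - (j + 1)))
        = fun c => (∏ j ∈ Finset.range t, ((∑ v ∈ e, chiF v c) - (j + 1)))
            * ((∑ v ∈ e, chiF v c) - (t + 1)) := by
      funext c; rw [Finset.prod_range_succ]
    rw [this]
    exact mul_linear_mem e _ t _ ih

lemma UF_mono {t t' : ℕ} (h : t ≤ t') : UF (V := V) t ≤ UF (V := V) t' :=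
  Submodule.span_mono (Set.image_mono fun S hS => le_trans hS h)

lemma PF_mem (e : Finset V) {d : ℕ} (hcard : e.card ≤ d) : PF e ∈ UF (V := V) (d - 1) :=
  UF_mono (Nat.sub_le_sub_right hcard 1) (prod_linear_mem e (e.card - 1))

lemma PF_ne_zero_iff (e : Finset V) (he : e.Nonempty) (c : V → Fin 2) :
    PF e c ≠ 0 ↔ ∃ k, ∀ v ∈ e, c v = k := by
  set m := e.card with hm
  have hm1 : 1 ≤ m := Finset.card_pos.2 he
  set t : ℕ := ∑ v ∈ e, (c v : ℕ) with ht
  have hsum : (∑ v ∈ e, chiF v c) = (t : ℚ) := by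
    rw [ht]; push_cast [chiF]; rfl
  have htm : t ≤ m := by
    rw [ht, hm]
    calc ∑ v ∈ e, (c v : ℕ) ≤ ∑ v ∈ e, 1 :=
          Finset.sum_le_sum fun v _ => Nat.lt_succ_iff.1 (c v).isLt
      _ = e.card := by simp
  have hPF : PF e c = ∏ j ∈ Finset.range (m - 1), ((t : ℚ) - (j + 1)) := by
    rw [PF, hm]
    exact Finset.prod_congr rfl fun j _ => by rw [hsum]
  constructor
  · intro hne
    rw [hPF, Finset.prod_ne_zero_iff] at hne
    have ht0m : t = 0 ∨ t = m := by
      by_contra hcon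
      push_neg at hcon
      have h1 : 1 ≤ t := Nat.one_le_iff_ne_zero.2 hcon.1
      have h2 : t < m := lt_of_le_of_ne htm hcon.2
      have hj : t - 1 ∈ Finset.range (m - 1) := by
        rw [Finset.mem_range]; omega
      have := hne _ hj
      apply this
      have : ((t - 1 : ℕ) : ℚ) + 1 = (t : ℚ) := by
        push_cast [Nat.cast_sub h1]; ring
      rw [this]; ring
    rcases ht0m with h0 | hM
    · refine ⟨0, fun v hv => ?_⟩
      have hs0 : ∑ v ∈ e, (c v : ℕ) = 0 := by rw [← ht]; exact h0
      have hz : (c v : ℕ) = 0 := Finset.sum_eq_zero_iff.1 hs0 v hv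
      exact Fin.ext (by simpa using hz)
    · refine ⟨1, fun v hv => ?_⟩
      have hall : ∀ v ∈ e, (c v : ℕ) = 1 := by
        have hle : ∀ v ∈ e, (c v : ℕ) ≤ 1 := fun v _ => Nat.lt_succ_iff.1 (c v).isLt
        have hsum1 : ∑ v ∈ e, (c v : ℕ) = ∑ v ∈ e, 1 := by
          rw [← ht, Finset.sum_const, smul_eq_mul, mul_one, ← hm]
          exact hM
        exact fun v hv => (Finset.sum_eq_sum_iff_of_le hle).1 hsum1 v hv
      exact Fin.ext (by simpa using hall v hv)
  · rintro ⟨k, hk⟩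
    rw [hPF, Finset.prod_ne_zero_iff]
    intro j hj
    rw [Finset.mem_range] at hj
    have hk2 : (k : ℕ) = 0 ∨ (k : ℕ) = 1 := by omega
    rcases hk2 with h0 | h1
    · have ht0 : t = 0 := by
        rw [ht]
        exact Finset.sum_eq_zero fun v hv => by rw [hk v hv, h0]
      rw [ht0]
      push_cast
      intro hcon
      have : (j : ℚ) + 1 = 0 := by linarith
      have : (0:ℚ) ≤ (j:ℚ) := Nat.cast_nonneg j
      linarith
    · have htM : t = m := by
        rw [ht, hm, Finset.card_eq_sum_ones]
        exact Finset.sum_congr rfl fun v hv => by rw [hk v hv, h1]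
      rw [htM]
      intro hcon
      have hjm : (j : ℚ) + 1 < (m : ℚ) := by
        have : j + 1 < m := by omega
        exact_mod_cast this
      linarith

lemma geomSumLe2 (n k : ℕ) (hn2 : 2 ≤ n) :
    ∑ j ∈ Finset.range (k + 1), n ^ j ≤ 2 * n ^ k := by
  induction k with
  | zero => simp
  | succ k ih =>
    rw [Finset.sum_range_succ]
    have h3 : 2 * n ^ k ≤ n ^ (k + 1) := by
      rw [pow_succ]
      calc 2 * n ^ k = n ^ k * 2 := mul_comm _ _
        _ ≤ n ^ k * n := Nat.mul_le_mul_left _ hn2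
    calc ∑ j ∈ Finset.range (k + 1), n ^ j + n ^ (k + 1)
        ≤ 2 * n ^ k + n ^ (k + 1) := Nat.add_le_add_right ih _
      _ ≤ n ^ (k + 1) + n ^ (k + 1) := Nat.add_le_add_right h3 _
      _ = 2 * n ^ (k + 1) := (two_mul _).symm

lemma monomial_count (d n : ℕ) (hd : 1 ≤ d) (hdn : d ≤ n) (hn : Fintype.card V = n) :
    (Finset.univ.powerset.filter (fun S : Finset V => S.card ≤ d - 1)).card
      ≤ 2 * n ^ (d - 1) := by
  have hsub : (Finset.univ.powerset.filter (fun S : Finset V => S.card ≤ d - 1))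
      ⊆ (Finset.range d).biUnion (fun j => Finset.powersetCard j Finset.univ) := by
    intro S hS
    rw [Finset.mem_filter] at hS
    rw [Finset.mem_biUnion]
    exact ⟨S.card, Finset.mem_range.2 (by omega), Finset.mem_powersetCard_univ.2 rfl⟩
  have h1 : (Finset.univ.powerset.filter (fun S : Finset V => S.card ≤ d - 1)).card
      ≤ ∑ j ∈ Finset.range d, Nat.choose n j := by
    refine le_trans (Finset.card_le_card hsub) ?_
    refine le_trans (Finset.card_biUnion_le) ?_
    refine Finset.sum_le_sum fun j _ => ?_
    rw [Finset.card_powersetCard, Finset.card_univ, hn]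
  refine le_trans h1 ?_
  have h2 : ∑ j ∈ Finset.range d, Nat.choose n j ≤ ∑ j ∈ Finset.range d, n ^ j :=
    Finset.sum_le_sum fun j _ => Nat.choose_le_pow n j
  refine le_trans h2 ?_
  -- geometric sum bound
  obtain ⟨k, rfl⟩ : ∃ k, d = k + 1 := ⟨d - 1, by omega⟩
  simp only [Nat.add_sub_cancel]
  rcases Nat.lt_or_ge n 2 with hn2 | hn2
  · have hn1 : n = 1 := by omega
    have hk0 : k = 0 := by omega
    subst hn1; subst hk0; simp
  · exact geomSumLe2 n k hn2

end Aux

theorem hypergraph_two_colorability_kernel {V : Type} [Fintype V]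
    [DecidableEq V] (d n : ℕ) (hd : 1 ≤ d) (hn : Fintype.card V = n)
    (hdn : d ≤ n)
    (E : Finset (Finset V)) (hE : ∀ e ∈ E, e.Nonempty ∧ e.card ≤ d) :
    ∃ E' ⊆ E, E'.card ≤ 2 * n ^ (d - 1) ∧
      ((∃ c : V → Fin 2, ∀ e ∈ E, ¬ ∃ k, ∀ v ∈ e, c v = k) ↔
        (∃ c : V → Fin 2, ∀ e ∈ E', ¬ ∃ k, ∀ v ∈ e, c v = k)) := by
  classical
  set Fsp := (V → Fin 2) → ℚ
  set sSet : Set Fsp := PF '' (↑E : Set (Finset V)) with hsSet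
  obtain ⟨b, hbsub, hbspan, hbind⟩ := exists_linearIndependent ℚ sSet
  have hsfin : sSet.Finite := E.finite_toSet.image _
  have hbfin : b.Finite := hsfin.subset hbsub
  haveI : Fintype b := hbfin.fintype
  -- choice of representatives
  have hb' : ∀ u ∈ b, ∃ e, e ∈ E ∧ PF e = u := by
    intro u hu
    obtain ⟨e, he, hee⟩ := hbsub hu
    exact ⟨e, he, hee⟩
  set pick : Fsp → Finset V := fun u =>
    if h : ∃ e, e ∈ E ∧ PF e = u then h.choose else ∅ with hpick
  have hpickE : ∀ u ∈ b, pick u ∈ E ∧ PF (pick u) = u := by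
    intro u hu
    have h := hb' u hu
    rw [hpick]
    simp only [dif_pos h]
    exact h.choose_spec
  set E' : Finset (Finset V) := hbfin.toFinset.image pick with hE'
  have hE'sub : E' ⊆ E := by
    intro e he
    rw [hE', Finset.mem_image] at he
    obtain ⟨u, hu, rfl⟩ := he
    exact (hpickE u (hbfin.mem_toFinset.1 hu)).1
  -- cardinality bound
  have hspan_le : Submodule.span ℚ b ≤ UF (V := V) (d - 1) := by
    rw [hbspan]
    refine Submodule.span_le.2 ?_
    rintro x ⟨e, he, rfl⟩
    exact PF_mem e (hE e he).2
  have hUF_fin : UF (V := V) (d - 1) =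
      Submodule.span ℚ (↑((Finset.univ.powerset.filter
        (fun S : Finset V => S.card ≤ d - 1)).image monF) : Set Fsp) := by
    rw [UF]
    congr 1
    ext x
    simp only [Finset.coe_image, Set.mem_image, Finset.mem_coe, Finset.mem_filter,
      Finset.mem_powerset, Set.mem_setOf_eq]
    constructor
    · rintro ⟨S, hS, rfl⟩; exact ⟨S, ⟨Finset.subset_univ S, hS⟩, rfl⟩
    · rintro ⟨S, ⟨_, hS⟩, rfl⟩; exact ⟨S, hS, rfl⟩
  have hcard : E'.card ≤ 2 * n ^ (d - 1) := by
    have h1 : E'.card ≤ hbfin.toFinset.card := Finset.card_image_le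
    have h2 : hbfin.toFinset.card = Module.finrank ℚ (Submodule.span ℚ b) := by
      rw [finrank_span_set_eq_card hbind]
      congr 1
      exact (Set.Finite.toFinset_eq_toFinset hbfin).symm ▸ rfl
    have h3 : Module.finrank ℚ (Submodule.span ℚ b)
        ≤ Module.finrank ℚ (UF (V := V) (d - 1)) :=
      Submodule.finrank_mono hspan_le
    have h4 : Module.finrank ℚ (UF (V := V) (d - 1))
        ≤ (Finset.univ.powerset.filter (fun S : Finset V => S.card ≤ d - 1)).card := by
      rw [hUF_fin]
      refine le_trans (finrank_span_finset_le_card _) Finset.card_image_le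
    have h5 := monomial_count (V := V) d n hd hdn hn
    omega
  refine ⟨E', hE'sub, hcard, ?_⟩
  constructor
  · rintro ⟨c, hc⟩
    exact ⟨c, fun e he => hc e (hE'sub he)⟩
  · rintro ⟨c, hc⟩
    refine ⟨c, fun f hf => ?_⟩
    -- evaluation at c kills everything in span b
    have hker : ∀ u ∈ b, u c = 0 := by
      intro u hu
      obtain ⟨hpE, hpu⟩ := hpickE u hu
      have hmem' : pick u ∈ E' := by
        rw [hE', Finset.mem_image]
        exact ⟨u, hbfin.mem_toFinset.2 hu, rfl⟩
      have hnot := hc (pick u) hmem'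
      have h0 : PF (pick u) c = 0 := by
        by_contra hne
        exact hnot ((PF_ne_zero_iff (pick u) (hE _ hpE).1 c).1 hne)
      rw [← hpu, h0]
    have hfmem : PF f ∈ Submodule.span ℚ b := by
      rw [hbspan]
      exact Submodule.subset_span ⟨f, hf, rfl⟩
    have hPf0 : PF f c = 0 := by
      have hle : Submodule.span ℚ b ≤ LinearMap.ker (LinearMap.proj (R := ℚ)
          (φ := fun _ : V → Fin 2 => ℚ) c) := by
        refine Submodule.span_le.2 fun u hu => ?_
        simp only [SetLike.mem_coe, LinearMap.mem_ker, LinearMap.proj_apply]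
        exact hker u hu
      have := hle hfmem
      exact this
    intro hcon
    exact ((PF_ne_zero_iff f (hE f hf).1 c).2 hcon) hPf0
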